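/- For the map F(x) = (x_1³ − 2x_1²x_2 + x_1x_2², x_2³) and q = (0, −1), both x = (0,1) and x = (1,1) solve the complementarity problem: x ≥ 0, F(x)+q ≥ 0, and x_i(F_i(x)+q_i) = 0 for i = 1,2. Hence this tensor complementarity problem has at least two distinct solutions. -/
import Mathlib


/-- For `F(x) = (x_1³ - 2x_1²x_2 + x_1x_2², x_2³)` and
`q = (0,-1)`, both `(0,1)` and `(1,1)` solve the complementarity problem,
so the TCP has at least two distinct solutions. -/
theorem stmt_3 :
    let F : (Fin 2 → ℝ) → (Fin 2 → ℝ) :=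
      fun x => ![x 0 ^ 3 - 2 * x 0 ^ 2 * x 1 + x 0 * x 1 ^ 2, x 1 ^ 3]
    let q : Fin 2 → ℝ := ![0, -1]
    let Sol : (Fin 2 → ℝ) → Prop := fun x =>
      (∀ i, 0 ≤ x i) ∧ (∀ i, 0 ≤ F x i + q i) ∧ ∑ i, x i * (F x i + q i) = 0
    Sol ![0, 1] ∧ Sol ![1, 1] ∧ (![0, 1] : Fin 2 → ℝ) ≠ ![1, 1] := by
  refine ⟨⟨fun i => ?_, fun i => ?_, ?_⟩, ⟨fun i => ?_, fun i => ?_, ?_⟩, ?_⟩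
  · fin_cases i <;> norm_num
  · fin_cases i <;> norm_num
  · simp [Fin.sum_univ_two]
  · fin_cases i <;> norm_num
  · fin_cases i <;> norm_num
  · norm_num [Fin.sum_univ_two]
  · intro h
    have := congrFun h 0
    norm_num at this
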